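/- arXiv:2005.08398 — 6 statements merged into one kernel-verified Lean document; each statement's English description precedes it below -/
import Mathlib

section
/- Let n, p, q, r, s be integers with n ≥ 2, p, q ≥ 2, r, s ≥ 2, gcd(p,q) = 1 and gcd(r,s) = 1. Then 1 − 6/(pq) = n·(1 − 6/(rs)) holds if and only if either (pq = 6 and rs = 6), or (n = 2, pq = 30 and rs = 10). -/
lemma aux_six_le (p q : ℤ) (hp : 2 ≤ p) (hq : 2 ≤ q) (h : IsCoprime p q) : 6 ≤ p * q := by
  rw [Int.isCoprime_iff_gcd_eq_one] at h
  by_contra hlt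
  push_neg at hlt
  have hp5 : p ≤ 2 := by nlinarith
  have hq5 : q ≤ 2 := by nlinarith
  interval_cases p <;> interval_cases q <;> simp_all

lemma aux_small (r s : ℤ) (hr : 2 ≤ r) (hs : 2 ≤ s) (h : IsCoprime r s)
    (hlt : r * s < 12) : r * s = 6 ∨ r * s = 10 := by
  rw [Int.isCoprime_iff_gcd_eq_one] at h
  have hr5 : r ≤ 5 := by nlinarith
  have hs5 : s ≤ 5 := by nlinarith
  interval_cases r <;> interval_cases s <;> revert h hlt <;> decide

/-- For integers `n ≥ 2`, `p, q ≥ 2`, `r, s ≥ 2` with `gcd(p,q) = 1` and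
`gcd(r,s) = 1`, the equation `1 - 6/(pq) = n * (1 - 6/(rs))` holds if and only if
either (`pq = 6` and `rs = 6`), or (`n = 2`, `pq = 30` and `rs = 10`). -/
theorem virasoro_character_growth_classification
    (n p q r s : ℤ) (hn : 2 ≤ n) (hp : 2 ≤ p) (hq : 2 ≤ q) (hr : 2 ≤ r) (hs : 2 ≤ s)
    (hpq : IsCoprime p q) (hrs : IsCoprime r s) :
    (1 - 6 / ((p : ℚ) * q) = (n : ℚ) * (1 - 6 / ((r : ℚ) * s))) ↔
      ((p * q = 6 ∧ r * s = 6) ∨ (n = 2 ∧ p * q = 30 ∧ r * s = 10)) := by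
  have ha : 6 ≤ p * q := aux_six_le p q hp hq hpq
  have hb : 6 ≤ r * s := aux_six_le r s hr hs hrs
  have hpq0 : (p : ℚ) * q ≠ 0 := by
    have : (0:ℚ) < (p:ℚ) * q := by exact_mod_cast (by nlinarith : (0:ℤ) < p * q)
    exact ne_of_gt this
  have hrs0 : (r : ℚ) * s ≠ 0 := by
    have : (0:ℚ) < (r:ℚ) * s := by exact_mod_cast (by nlinarith : (0:ℤ) < r * s)
    exact ne_of_gt this
  constructor
  · intro h
    field_simp at h
    -- inspect h
    have hE : (p*q) * (r*s) - 6 * (r*s) = n * ((p*q)*(r*s)) - n * (6 * (p*q)) := by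
      exact_mod_cast (by push_cast at h ⊢; ring_nf; ring_nf at h; linarith : ((p*q) * (r*s) - 6 * (r*s) : ℚ) = (n:ℚ) * ((p*q)*(r*s)) - (n:ℚ) * (6 * (p*q)))
    set a := p * q with hadef
    set b := r * s with hbdef
    have hb12 : b < 12 := by
      by_contra hc
      push_neg at hc
      nlinarith [mul_nonneg (by linarith : (0:ℤ) ≤ n - 2) (by nlinarith : (0:ℤ) ≤ a * (b - 6)),
        mul_nonneg (by linarith : (0:ℤ) ≤ a) (by linarith : (0:ℤ) ≤ b - 12)]
    have := aux_small r s hr hs hrs (by omega)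
    rcases this with h6 | h10
    · have hb6 : b = 6 := by rw [hbdef]; exact h6
      left
      constructor
      · rw [hb6] at hE; nlinarith
      · exact h6
    · have hb10 : b = 10 := by rw [hbdef]; exact h10
      right
      rw [hb10] at hE
      rcases le_or_gt n 2 with hn2 | hn3
      · have : n = 2 := le_antisymm hn2 hn
        subst this
        refine ⟨rfl, by nlinarith, h10⟩
      · exfalso; nlinarith
  · rintro (⟨h1, h2⟩ | ⟨hn2, h1, h2⟩)
    · have e1 : (p:ℚ) * q = 6 := by exact_mod_cast h1
      have e2 : (r:ℚ) * s = 6 := by exact_mod_cast h2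
      rw [e1, e2]; norm_num
    · have e1 : (p:ℚ) * q = 30 := by exact_mod_cast h1
      have e2 : (r:ℚ) * s = 10 := by exact_mod_cast h2
      subst hn2
      rw [e1, e2]; norm_num
end

section
/- Let n, p, q, r, s be integers with n ≥ 2, p, q ≥ 2, r, s ≥ 2, gcd(p,q) = 1 and gcd(r,s) = 1. Then the two equations 1 − 6/(pq) = n·(1 − 6/(rs)) and 1 − 6(p−q)²/(pq) = n·(1 − 6(r−s)²/(rs)) hold simultaneously if and only if either ({p,q} = {2,3} and {r,s} = {2,3}, with n arbitrary), or (n = 2, {p,q} = {3,10} and {r,s} = {2,5}). -/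
lemma pair_eq' (p q a b : ℤ) (h : ({p, q} : Finset ℤ) = {a, b}) :
    (p = a ∧ q = b) ∨ (p = b ∧ q = a) := by
  have h1 : p ∈ ({a, b} : Finset ℤ) := h ▸ (by simp)
  have h2 : q ∈ ({a, b} : Finset ℤ) := h ▸ (by simp)
  have h3 : a ∈ ({p, q} : Finset ℤ) := h ▸ (by simp)
  have h4 : b ∈ ({p, q} : Finset ℤ) := h ▸ (by simp)
  simp only [Finset.mem_insert, Finset.mem_singleton] at h1 h2 h3 h4
  omega

lemma rs_ge_six (r s : ℤ) (hr : 2 ≤ r) (hs : 2 ≤ s) (h : IsCoprime r s) : 6 ≤ r * s := by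
  by_contra hc
  push_neg at hc
  have hr2 : r = 2 := by nlinarith
  have hs2 : s = 2 := by nlinarith
  subst hr2 hs2
  rw [Int.isCoprime_iff_gcd_eq_one] at h
  norm_num at h

lemma pq6 (p q : ℤ) (hp : 2 ≤ p) (hq : 2 ≤ q) (h : p * q = 6) :
    p = 2 ∧ q = 3 ∨ p = 3 ∧ q = 2 := by
  have : p ≤ 3 := by nlinarith
  interval_cases p <;> omega

lemma pq30 (p q : ℤ) (hp : 2 ≤ p) (hq : 2 ≤ q) (h : p * q = 30) (h2 : (p - q) ^ 2 = 49) :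
    p = 3 ∧ q = 10 ∨ p = 10 ∧ q = 3 := by
  have : p ≤ 15 := by nlinarith
  interval_cases p <;>
    first
      | omega
      | (rcases (by omega : q = 15 ∨ q = 6 ∨ q = 5 ∨ q = 2) with rfl | rfl | rfl | rfl <;>
          norm_num at h2)

lemma case_six (n p q : ℤ) (hp : 2 ≤ p) (hq : 2 ≤ q)
    (h1 : 1 - 6 / ((p : ℚ) * q) = (n : ℚ) * (1 - 6 / ((2 : ℚ) * 3))) :
    ({p, q} : Finset ℤ) = {2, 3} := by
  have hp0 : (0:ℚ) < (p:ℚ) := by exact_mod_cast (by omega : (0:ℤ) < p)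
  have hq0 : (0:ℚ) < (q:ℚ) := by exact_mod_cast (by omega : (0:ℤ) < q)
  norm_num at h1
  field_simp at h1
  have h6 : p * q = 6 := by exact_mod_cast (by linarith : (p:ℚ) * q = 6)
  rcases pq6 p q hp hq h6 with ⟨rfl, rfl⟩ | ⟨rfl, rfl⟩ <;> decide

lemma case_ten (n p q : ℤ) (hn : 2 ≤ n) (hp : 2 ≤ p) (hq : 2 ≤ q)
    (h1 : 1 - 6 / ((p : ℚ) * q) = (n : ℚ) * (1 - 6 / ((2 : ℚ) * 5)))
    (h2 : 1 - 6 * ((p : ℚ) - q) ^ 2 / ((p : ℚ) * q) =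
        (n : ℚ) * (1 - 6 * ((2 : ℚ) - 5) ^ 2 / ((2 : ℚ) * 5))) :
    n = 2 ∧ ({p, q} : Finset ℤ) = {3, 10} := by
  have hp0 : (0:ℚ) < (p:ℚ) := by exact_mod_cast (by omega : (0:ℤ) < p)
  have hq0 : (0:ℚ) < (q:ℚ) := by exact_mod_cast (by omega : (0:ℤ) < q)
  have hpos : (0:ℚ) < (p:ℚ)*q := by positivity
  have hd : 0 < 6 / ((p:ℚ)*q) := by positivity
  have hn2 : (2:ℚ) ≤ (n:ℚ) := by exact_mod_cast hn
  norm_num at h1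
  have hnlt : (n:ℚ) < 5/2 := by nlinarith
  have hn2' : n = 2 := by
    have : n < 3 := by exact_mod_cast (by linarith : (n:ℚ) < 3)
    omega
  subst hn2'
  refine ⟨rfl, ?_⟩
  norm_num at h1 h2
  field_simp at h1
  have h30 : (p:ℚ) * q = 30 := by linarith
  rw [h30] at h2
  have h49 : ((p:ℚ) - q) ^ 2 = 49 := by linarith
  have h49' : (p - q) ^ 2 = 49 := by exact_mod_cast h49
  have h30' : p * q = 30 := by exact_mod_cast h30
  rcases pq30 p q hp hq h30' h49' with ⟨rfl, rfl⟩ | ⟨rfl, rfl⟩ <;> decide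

/-- For integers `n ≥ 2`, `p, q ≥ 2`, `r, s ≥ 2` with `gcd(p,q) = 1` and
`gcd(r,s) = 1`, the two equations `1 - 6/(pq) = n(1 - 6/(rs))` (growth of characters) and
`1 - 6(p-q)²/(pq) = n(1 - 6(r-s)²/(rs))` (equality of central charges) hold simultaneously
if and only if either `{p,q} = {2,3}` and `{r,s} = {2,3}` (with `n` arbitrary), or
`n = 2`, `{p,q} = {3,10}` and `{r,s} = {2,5}`. -/
theorem conformal_embedding_simple_classification
    (n p q r s : ℤ) (hn : 2 ≤ n) (hp : 2 ≤ p) (hq : 2 ≤ q) (hr : 2 ≤ r) (hs : 2 ≤ s)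
    (hpq : IsCoprime p q) (hrs : IsCoprime r s) :
    ((1 - 6 / ((p : ℚ) * q) = (n : ℚ) * (1 - 6 / ((r : ℚ) * s))) ∧
      (1 - 6 * ((p : ℚ) - q) ^ 2 / ((p : ℚ) * q) =
        (n : ℚ) * (1 - 6 * ((r : ℚ) - s) ^ 2 / ((r : ℚ) * s)))) ↔
      ((({p, q} : Finset ℤ) = {2, 3} ∧ ({r, s} : Finset ℤ) = {2, 3}) ∨
        (n = 2 ∧ ({p, q} : Finset ℤ) = {3, 10} ∧ ({r, s} : Finset ℤ) = {2, 5})) := by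
  constructor
  · rintro ⟨h1, h2⟩
    have hp0 : (0:ℚ) < (p:ℚ) := by exact_mod_cast (by omega : (0:ℤ) < p)
    have hq0 : (0:ℚ) < (q:ℚ) := by exact_mod_cast (by omega : (0:ℤ) < q)
    have hpos : (0:ℚ) < (p:ℚ)*q := by positivity
    have hd : 0 < 6 / ((p:ℚ)*q) := by positivity
    have hrs6 : (6:ℤ) ≤ r * s := rs_ge_six r s hr hs hrs
    have hrs6Q : (6:ℚ) ≤ (r:ℚ) * s := by exact_mod_cast hrs6
    have hrspos : (0:ℚ) < (r:ℚ) * s := by linarith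
    have hnn : (0:ℚ) ≤ 1 - 6 / ((r:ℚ) * s) := by
      have : 6 / ((r:ℚ) * s) ≤ 1 := (div_le_one hrspos).2 (by linarith)
      linarith
    have hn2 : (2:ℚ) ≤ (n:ℚ) := by exact_mod_cast hn
    have hlt : (n:ℚ) * (1 - 6/((r:ℚ)*s)) < 1 := by rw [← h1]; linarith
    have hhalf : 1/2 < 6 / ((r:ℚ) * s) := by nlinarith
    have h12 : (r:ℚ) * s < 12 := by
      rw [lt_div_iff₀ hrspos] at hhalf
      linarith
    have h11 : r * s ≤ 11 := by
      have : (r:ℤ) * s < 12 := by exact_mod_cast h12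
      omega
    have hr5 : r ≤ 5 := by nlinarith
    have hs5 : s ≤ 5 := by nlinarith
    rw [Int.isCoprime_iff_gcd_eq_one] at hrs
    interval_cases r <;> interval_cases s <;>
      first
        | (exfalso; revert hrs; decide)
        | omega
        | (left; push_cast at h1 h2
           exact ⟨case_six n p q hp hq (by linarith [h1]), by decide⟩)
        | (right; push_cast at h1 h2
           obtain ⟨hn2', hpq'⟩ := case_ten n p q hn hp hq (by linarith [h1]) (by linarith [h2])
           exact ⟨hn2', hpq', by decide⟩)
  · rintro (⟨hpq', hrs'⟩ | ⟨rfl, hpq', hrs'⟩)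
    · rcases pair_eq' p q 2 3 hpq' with ⟨rfl, rfl⟩ | ⟨rfl, rfl⟩ <;>
        rcases pair_eq' r s 2 3 hrs' with ⟨rfl, rfl⟩ | ⟨rfl, rfl⟩ <;>
        constructor <;> push_cast <;> ring_nf <;> norm_num
    · rcases pair_eq' p q 3 10 hpq' with ⟨rfl, rfl⟩ | ⟨rfl, rfl⟩ <;>
        rcases pair_eq' r s 2 5 hrs' with ⟨rfl, rfl⟩ | ⟨rfl, rfl⟩ <;>
        constructor <;> push_cast <;> norm_num
end

section
/- There are infinitely many positive rational numbers t such that 9 + 78t − 137t² + 78t³ + 9t⁴ is the square of a rational number. -/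
def qn3_seqP : ℕ → ℚ × ℚ
  | 0 => (1233/16, 31473/64)
  | n+1 =>
    let X := (qn3_seqP n).1
    let W := (qn3_seqP n).2
    let l := (3*X^2 - 274*X + 5760)/(2*W)
    (l^2 + 137 - 2*X, l*(X - (l^2 + 137 - 2*X)) - W)

lemma qn3_norm_odd (z : ℤ) (h : ¬ ((2:ℤ) ∣ z)) : ‖((z : ℚ_[2]))‖ = 1 := by
  refine le_antisymm (Padic.norm_int_le_one z) ?_
  by_contra hlt
  push_neg at hlt
  exact h ((Padic.norm_intCast_lt_one_iff).mp hlt)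

lemma qn3_norm_two : ‖((2 : ℚ_[2]))‖ = 1/2 := by
  have := @Padic.norm_p 2 _
  simpa using this

lemma qn3_norm_add_left {a b : ℚ_[2]} (h : ‖b‖ < ‖a‖) : ‖a + b‖ = ‖a‖ := by
  rw [Padic.add_eq_max_of_ne (show ‖a‖ ≠ ‖b‖ from h.ne')]
  exact max_eq_left h.le

lemma qn3_norm_add_right {a b : ℚ_[2]} (h : ‖a‖ < ‖b‖) : ‖a + b‖ = ‖b‖ := by
  rw [add_comm]; exact qn3_norm_add_left h

lemma qn3_norm_sub_left {a b : ℚ_[2]} (h : ‖b‖ < ‖a‖) : ‖a - b‖ = ‖a‖ := by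
  rw [sub_eq_add_neg]
  apply qn3_norm_add_left
  rwa [norm_neg]

lemma qn3_norm_sub_right {a b : ℚ_[2]} (h : ‖a‖ < ‖b‖) : ‖a - b‖ = ‖b‖ := by
  rw [← norm_neg, neg_sub]
  exact qn3_norm_sub_left h

lemma qn3_two_pow_lt {m n : ℕ} (h : m < n) : (2:ℝ)^m < 2^n :=
  pow_lt_pow_right₀ one_lt_two h

lemma qn3_one_le_two_pow (n : ℕ) : (1:ℝ) ≤ 2^n := one_le_pow₀ (by norm_num)

lemma qn3_curve_inv (n : ℕ) :
    ((qn3_seqP n).2)^2 = ((qn3_seqP n).1)^3 - 137*((qn3_seqP n).1)^2 + 5760*((qn3_seqP n).1) + 153900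
    ∧ ‖(((qn3_seqP n).1 : ℚ) : ℚ_[2])‖ = 2^(2*n+4)
    ∧ ‖(((qn3_seqP n).2 : ℚ) : ℚ_[2])‖ = 2^(3*n+6) := by
  induction n with
  | zero =>
    refine ⟨by norm_num [qn3_seqP], ?_, ?_⟩
    · show ‖(((1233:ℚ)/16 : ℚ) : ℚ_[2])‖ = _
      push_cast
      rw [norm_div]
      have h1 : ‖((1233 : ℚ_[2]))‖ = 1 := by simpa using qn3_norm_odd 1233 (by decide)
      have h2 : ‖((16 : ℚ_[2]))‖ = (1/2)^4 := by
        rw [show ((16:ℚ_[2])) = 2^4 by norm_num, norm_pow, qn3_norm_two]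
      rw [h1, h2]; norm_num
    · show ‖(((31473:ℚ)/64 : ℚ) : ℚ_[2])‖ = _
      push_cast
      rw [norm_div]
      have h1 : ‖((31473 : ℚ_[2]))‖ = 1 := by simpa using qn3_norm_odd 31473 (by decide)
      have h2 : ‖((64 : ℚ_[2]))‖ = (1/2)^6 := by
        rw [show ((64:ℚ_[2])) = 2^6 by norm_num, norm_pow, qn3_norm_two]
      rw [h1, h2]; norm_num
  | succ n ih =>
    obtain ⟨hc, hX, hW⟩ := ih
    set X := (qn3_seqP n).1 with hXdef
    set W := (qn3_seqP n).2 with hWdef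
    have hWne : W ≠ 0 := by
      intro h
      rw [h] at hW
      simp at hW
      have : (0:ℝ) < 2^(3*n+6) := by positivity
      rw [← hW] at this
      exact lt_irrefl _ this
    have hseq : qn3_seqP (n+1) =
        (((3*X^2 - 274*X + 5760)/(2*W))^2 + 137 - 2*X,
         ((3*X^2 - 274*X + 5760)/(2*W))*(X - (((3*X^2 - 274*X + 5760)/(2*W))^2 + 137 - 2*X)) - W) := by
      rw [qn3_seqP]
    have hcurve' : ((qn3_seqP (n+1)).2)^2 = ((qn3_seqP (n+1)).1)^3 - 137*((qn3_seqP (n+1)).1)^2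
        + 5760*((qn3_seqP (n+1)).1) + 153900 := by
      rw [hseq]
      field_simp
      ring_nf
      linear_combination (64*W^6) * hc
    -- norms
    set x : ℚ_[2] := ((X : ℚ) : ℚ_[2]) with hxdef
    set w : ℚ_[2] := ((W : ℚ) : ℚ_[2]) with hwdef
    have n3 : ‖(3 : ℚ_[2])‖ = 1 := by simpa using qn3_norm_odd 3 (by decide)
    have n137 : ‖(137 : ℚ_[2])‖ = 1 := by simpa using qn3_norm_odd 137 (by decide)
    have n274 : ‖(274 : ℚ_[2])‖ = 1/2 := by
      rw [show ((274:ℚ_[2])) = 2*137 by norm_num, norm_mul, qn3_norm_two, n137]; norm_num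
    have n5760 : ‖(5760 : ℚ_[2])‖ = 1/128 := by
      have h45 : ‖(45 : ℚ_[2])‖ = 1 := by simpa using qn3_norm_odd 45 (by decide)
      rw [show ((5760:ℚ_[2])) = 2^7*45 by norm_num, norm_mul, norm_pow, qn3_norm_two, h45]
      norm_num
    have nL : ‖3*x^2 - 274*x + 5760‖ = 2^(4*n+8) := by
      have e : 3*x^2 - 274*x + 5760 = 3*x^2 + (5760 - 274*x) := by ring
      have h274x : ‖274*x‖ = 2^(2*n+3) := by
        rw [norm_mul, n274, hX]
        rw [show 2*n+4 = (2*n+3)+1 by omega, pow_succ]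
        ring
      have hinner : ‖5760 - 274*x‖ = 2^(2*n+3) := by
        rw [qn3_norm_sub_right]
        · exact h274x
        · rw [h274x, n5760]
          calc (1/128:ℝ) < 1 := by norm_num
          _ ≤ 2^(2*n+3) := qn3_one_le_two_pow _
      have h3x2 : ‖3*x^2‖ = 2^(4*n+8) := by
        rw [norm_mul, norm_pow, n3, hX, one_mul, ← pow_mul]
        congr 1
        omega
      rw [e, qn3_norm_add_left]
      · exact h3x2
      · rw [hinner, h3x2]
        exact qn3_two_pow_lt (by omega)
    have n2w : ‖2*w‖ = 2^(3*n+5) := by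
      rw [norm_mul, qn3_norm_two, hW, show 3*n+6 = (3*n+5)+1 by omega, pow_succ]
      ring
    have hlnorm : ‖(3*x^2 - 274*x + 5760)/(2*w)‖ = 2^(n+3) := by
      rw [norm_div, nL, n2w]
      rw [show 4*n+8 = (n+3)+(3*n+5) by omega, pow_add]
      field_simp
    have nX' : ‖((3*x^2 - 274*x + 5760)/(2*w))^2 + 137 - 2*x‖ = 2^(2*n+6) := by
      have e : ((3*x^2 - 274*x + 5760)/(2*w))^2 + 137 - 2*x
          = ((3*x^2 - 274*x + 5760)/(2*w))^2 + (137 - 2*x) := by ring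
      have h2x : ‖2*x‖ = 2^(2*n+3) := by
        rw [norm_mul, qn3_norm_two, hX, show 2*n+4 = (2*n+3)+1 by omega, pow_succ]
        ring
      have hinner : ‖137 - 2*x‖ = 2^(2*n+3) := by
        rw [qn3_norm_sub_right]
        · exact h2x
        · rw [h2x, n137]
          have := qn3_two_pow_lt (m:=0) (n:=2*n+3) (by omega)
          simpa using this
      have hl2 : ‖((3*x^2 - 274*x + 5760)/(2*w))^2‖ = 2^(2*n+6) := by
        rw [norm_pow, hlnorm, ← pow_mul]
        congr 1
        omega
      rw [e, qn3_norm_add_left]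
      · exact hl2
      · rw [hinner, hl2]
        exact qn3_two_pow_lt (by omega)
    constructor
    · exact hcurve'
    constructor
    · have hcast : (((qn3_seqP (n+1)).1 : ℚ) : ℚ_[2])
          = ((3*x^2 - 274*x + 5760)/(2*w))^2 + 137 - 2*x := by
        rw [hseq]
        push_cast
        ring
      rw [show 2*(n+1)+4 = 2*n+6 by omega, hcast, nX']
    · have hcast : (((qn3_seqP (n+1)).2 : ℚ) : ℚ_[2])
          = ((3*x^2 - 274*x + 5760)/(2*w))*(x - (((3*x^2 - 274*x + 5760)/(2*w))^2 + 137 - 2*x)) - w := by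
        rw [hseq]
        push_cast
        ring
      have hxz : ‖x - (((3*x^2 - 274*x + 5760)/(2*w))^2 + 137 - 2*x)‖ = 2^(2*n+6) := by
        rw [qn3_norm_sub_right]
        · exact nX'
        · rw [hX, nX']
          exact qn3_two_pow_lt (by omega)
      rw [show 3*(n+1)+6 = 3*n+9 by omega, hcast, qn3_norm_sub_left]
      · rw [norm_mul, hlnorm, hxz, ← pow_add]
        congr 1
        omega
      · rw [norm_mul, hlnorm, hxz, ← pow_add, hW]
        exact qn3_two_pow_lt (by omega)


lemma qn3_quart_id (X W t : ℚ) (hc : W^2 = X^3 - 137*X^2 + 5760*X + 153900)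
    (hD : 13*X+234-W ≠ 0) (htD : t*(13*X+234-W) = 6*(306-X)) :
    9 + 78*t - 137*t^2 + 78*t^3 + 9*t^4 = ((X*t^2 - 78*t - 18)/6)^2 := by
  have key : (13*X+234-W)^4 * (36*(9 + 78*t - 137*t^2 + 78*t^3 + 9*t^4)
      - (X*t^2 - 78*t - 18)^2) = 0 := by
    linear_combination ((-2197)*X^5*t^3 + (1014)*X^5*t^2 + (-468)*X^5*t + (216)*X^5 + (507)*X^4*W*t^3 + (-156)*X^4*W*t^2 + (36)*X^4*W*t + (-118638)*X^4*t^3 + (68952)*X^4*t^2 + (198900)*X^4*t + (-161784)*X^4 + (-39)*X^3*W^2*t^3 + (6)*X^3*W^2*t^2 + (18252)*X^3*W*t^3 + (-34164)*X^3*W*t^2 + (-15948)*X^3*W*t + (-1423656)*X^3*t^3 + (13506480)*X^3*t^2 + (-18583344)*X^3*t + (39579840)*X^3 + (1)*X^2*W^3*t^3 + (-702)*X^2*W^2*t^3 + (4248)*X^2*W^2*t^2 + (468)*X^2*W^2*t + (-216)*X^2*W^2 + (-3361176)*X^2*W*t^2 + (1716552)*X^2*W*t + (25625808)*X^2*t^3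 + (654443712)*X^2*t^2 + (351179712)*X^2*t + (-3499060032)*X^2 + (-156)*X*W^3*t^2 + (-36)*X*W^3*t + (12636)*X*W^2*t^3 + (217080)*X*W^2*t^2 + (-134784)*X*W^2*t + (132192)*X*W^2 + (-5913648)*X*W*t^3 + (-91434096)*X*W*t^2 + (-57911760)*X*W*t + (691896816)*X*t^3 + (11507959008)*X*t^2 + (35591063040)*X*t + (96153816960)*X + (-324)*W^3*t^3 + (-2808)*W^3*t^2 + (11016)*W^3*t + (227448)*W^2*t^3 + (2566080)*W^2*t^2 + (-2577744)*W^2*t + (-20225376)*W^2 + (-53222832)*W*t^3 + (-739660896)*W*t^2 + (-1695362400)*W*t + (4151380896)*t^3 + (68551007616)*t^2 + (396714801600)*t + (3112685366400)) * htD + ((1296)*X^3 + (-1189728)*X^2 + (364056768)*X + (-37133790336)) * hc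
  have h4 : (13*X+234-W)^4 ≠ 0 := pow_ne_zero _ hD
  have key2 : 36*(9 + 78*t - 137*t^2 + 78*t^3 + 9*t^4) - (X*t^2 - 78*t - 18)^2 = 0 := by
    rcases mul_eq_zero.mp key with h | h
    · exact absurd h h4
    · exact h
  linear_combination key2 / 36

lemma qn3_backmap (X W : ℚ) (hc : W^2 = X^3 - 137*X^2 + 5760*X + 153900)
    (h1 : X ≠ 306) (h2 : X ≠ 18) (h3 : X ≠ -18) :
    ∃ t v : ℚ, 0 < t ∧ 9 + 78*t - 137*t^2 + 78*t^3 + 9*t^4 = v^2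
      ∧ X * t^2 = 6*v + 78*t + 18 := by
  have hfac : (13*X+234-W)*(13*X+234+W) = (306-X)*(X-18)*(X+18) := by
    linear_combination -hc
  have h306 : 306 - X ≠ 0 := fun h => h1 (by linarith [sub_eq_zero.mp h])
  have h18a : X - 18 ≠ 0 := sub_ne_zero.mpr h2
  have h18b : X + 18 ≠ 0 := fun h => h3 (by linarith)
  have hD1 : 13*X+234-W ≠ 0 := by
    intro h
    rw [h, zero_mul] at hfac
    exact (mul_ne_zero (mul_ne_zero h306 h18a) h18b) hfac.symm
  have hD2 : 13*X+234+W ≠ 0 := by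
    intro h
    rw [h, mul_zero] at hfac
    exact (mul_ne_zero (mul_ne_zero h306 h18a) h18b) hfac.symm
  have hq : 0 < X^2 - 155*X + 8550 := by nlinarith [sq_nonneg (2*X - 155)]
  have hXgt : -18 < X := by
    rcases lt_or_ge (-18) X with h | h
    · exact h
    · exfalso
      have h188 : X + 18 < 0 := lt_of_le_of_ne (by linarith) h18b
      have hWc : W^2 = (X+18)*(X^2-155*X+8550) := by linear_combination hc
      nlinarith [sq_nonneg W, mul_neg_of_neg_of_pos h188 hq]
  set u1 := 6*(306-X)/(13*X+234-W) with hu1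
  set u2 := 6*(306-X)/(13*X+234+W) with hu2
  have htD1 : u1*(13*X+234-W) = 6*(306-X) := by
    rw [hu1, div_mul_cancel₀ _ hD1]
  have hc2 : (-W)^2 = X^3 - 137*X^2 + 5760*X + 153900 := by linear_combination hc
  have hD2' : 13*X+234-(-W) ≠ 0 := by
    intro h; apply hD2; linarith [h]
  have htD2 : u2*(13*X+234-(-W)) = 6*(306-X) := by
    rw [hu2, show 13*X+234-(-W) = 13*X+234+W by ring, div_mul_cancel₀ _ hD2]
  have key : 0 < u1 ∨ 0 < u2 := by
    rcases lt_trichotomy X 18 with hX18 | hX18 | hX18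
    · have hprod : u1*u2 = 36*(306-X)/((X-18)*(X+18)) := by
        rw [hu1, hu2]
        rw [div_mul_div_comm, div_eq_div_iff (mul_ne_zero hD1 hD2) (mul_ne_zero h18a h18b)]
        linear_combination (36*(306-X)) * hc
      by_contra hcon
      push_neg at hcon
      obtain ⟨ha, hb⟩ := hcon
      have hprodneg : u1*u2 < 0 := by
        rw [hprod]
        apply div_neg_of_pos_of_neg
        · nlinarith
        · nlinarith
      nlinarith [mul_nonneg (neg_nonneg.mpr ha) (neg_nonneg.mpr hb)]
    · exact absurd hX18 h2
    · have hsum : u1+u2 = 156/(X-18) := by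
        rw [hu1, hu2]
        rw [div_add_div _ _ hD1 hD2, div_eq_div_iff (mul_ne_zero hD1 hD2) h18a]
        linear_combination 156 * hc
      by_contra hcon
      push_neg at hcon
      obtain ⟨ha, hb⟩ := hcon
      have hle : u1 + u2 ≤ 0 := by linarith
      rw [hsum] at hle
      have : (0:ℚ) < 156/(X-18) := by
        apply div_pos (by norm_num)
        linarith
      linarith
  rcases key with hpos | hpos
  · exact ⟨u1, (X*u1^2 - 78*u1 - 18)/6, hpos,
      qn3_quart_id X W u1 hc hD1 htD1, by ring⟩
  · exact ⟨u2, (X*u2^2 - 78*u2 - 18)/6, hpos,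
      qn3_quart_id X (-W) u2 hc2 hD2' htD2, by ring⟩

lemma qn3_X_ne_int (n : ℕ) (c : ℤ) : (qn3_seqP n).1 ≠ (c:ℚ) := by
  intro h
  have hX := (qn3_curve_inv n).2.1
  rw [h] at hX
  have hle : ‖(((c:ℚ) : ℚ) : ℚ_[2])‖ ≤ 1 := by
    push_cast
    exact Padic.norm_int_le_one c
  rw [hX] at hle
  have h1 : (1:ℝ) < 2^(2*n+4) := by
    have := qn3_two_pow_lt (m := 0) (n := 2*n+4) (by omega)
    simpa using this
  linarith

lemma qn3_X_inj : Function.Injective (fun n => (qn3_seqP n).1) := by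
  intro m n h
  simp only at h
  have hm := (qn3_curve_inv m).2.1
  have hn := (qn3_curve_inv n).2.1
  rw [h] at hm
  rw [hm] at hn
  rcases lt_trichotomy m n with hlt | he | hlt
  · exact absurd hn (ne_of_lt (qn3_two_pow_lt (by omega)))
  · exact he
  · exact absurd hn (ne_of_gt (qn3_two_pow_lt (by omega)))

/-- There are infinitely many positive rationals `t` such that
`9 + 78t - 137t² + 78t³ + 9t⁴` is the square of a rational number. -/
theorem infinitely_many_square_values_quartic_n3 :
    {t : ℚ | 0 < t ∧ ∃ u : ℚ, 9 + 78 * t - 137 * t ^ 2 + 78 * t ^ 3 + 9 * t ^ 4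
      = u ^ 2}.Infinite := by
  have exists_tv : ∀ n : ℕ, ∃ t v : ℚ, 0 < t
      ∧ 9 + 78*t - 137*t^2 + 78*t^3 + 9*t^4 = v^2
      ∧ (qn3_seqP n).1 * t^2 = 6*v + 78*t + 18 := by
    intro n
    obtain ⟨hc, _, _⟩ := qn3_curve_inv n
    exact qn3_backmap _ (qn3_seqP n).2 hc
      (by exact_mod_cast qn3_X_ne_int n 306)
      (by exact_mod_cast qn3_X_ne_int n 18)
      (by exact_mod_cast qn3_X_ne_int n (-18))
  choose t v hpos hsq hrel using exists_tv
  have hinj : Function.Injective (fun n => ((t n, v n) : ℚ × ℚ)) := by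
    intro m n h
    simp only [Prod.mk.injEq] at h
    obtain ⟨ht, hv⟩ := h
    apply qn3_X_inj
    simp only
    have hm := hrel m
    rw [ht, hv] at hm
    have hn := hrel n
    have htn : t n ≠ 0 := ne_of_gt (hpos n)
    have : (qn3_seqP m).1 * (t n)^2 = (qn3_seqP n).1 * (t n)^2 := by rw [hm, hn]
    exact mul_right_cancel₀ (pow_ne_zero 2 htn) this
  by_contra hfin
  rw [Set.not_infinite] at hfin
  set S2 : Set (ℚ × ℚ) := {p : ℚ × ℚ | 0 < p.1
    ∧ 9 + 78 * p.1 - 137 * p.1 ^ 2 + 78 * p.1 ^ 3 + 9 * p.1 ^ 4 = p.2 ^ 2} with hS2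
  have hS2inf : S2.Infinite := by
    apply Set.infinite_of_injective_forall_mem hinj
    intro n
    exact ⟨hpos n, by have := hsq n; ring_nf; ring_nf at this; linarith [this]⟩
  apply hS2inf
  have himg : (fun p : ℚ × ℚ => (p.1, decide (0 ≤ p.2))) '' S2
      ⊆ ({t : ℚ | 0 < t ∧ ∃ u : ℚ, 9 + 78 * t - 137 * t ^ 2 + 78 * t ^ 3 + 9 * t ^ 4 = u ^ 2}) ×ˢ (Set.univ : Set Bool) := by
    rintro ⟨a, b⟩ ⟨p, hp, hpe⟩
    simp only [Prod.mk.injEq] at hpe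
    refine ⟨?_, trivial⟩
    rw [← hpe.1]
    exact ⟨hp.1, p.2, hp.2⟩
  have hinjOn : Set.InjOn (fun p : ℚ × ℚ => (p.1, decide (0 ≤ p.2))) S2 := by
    rintro ⟨a, b⟩ ha ⟨c, d⟩ hc he
    simp only [Prod.mk.injEq] at he
    obtain ⟨h1, h2⟩ := he
    subst h1
    have hb2 : b^2 = d^2 := by
      have := ha.2
      rw [hc.2] at this
      exact this.symm
    have : (b - d) * (b + d) = 0 := by ring_nf; linarith [hb2]
    rcases mul_eq_zero.mp this with h | h
    · have : b = d := by linarith [sub_eq_zero.mp h]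
      simp [this]
    · have hbd : b = -d := by linarith
      rcases eq_or_ne d 0 with h0 | h0
      · simp [hbd, h0]
      · exfalso
        have := decide_eq_decide.mp h2
        rcases le_or_gt 0 d with hd | hd
        · have : 0 ≤ b := this.mpr hd
          have hd' : 0 < d := lt_of_le_of_ne hd (Ne.symm h0)
          rw [hbd] at this
          linarith
        · have hnb : ¬ (0 ≤ b) := fun hb => absurd (this.mp hb) (not_le.mpr hd)
          rw [hbd] at hnb
          push_neg at hnb
          linarith
  exact Set.Finite.of_finite_image
    (Set.Finite.subset (hfin.prod (Set.finite_univ)) himg) hinjOn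
end

section
/- For every even integer a ≥ 2 and every complex number c, the two complex numbers p₁(a,c) = a⁵(7c−16) + 5a⁴(13c−64) + 15a³(9c−88) + a²(560−185c) − 106a(7c−76) − 480c + 7440 and p₂(a,c) = a⁵(13c−40) + a⁴(70c−556) + 25a³(5c−68) + 40a²(2c−23) + 12a(c+70) − 144 are not both zero. -/
/-- For every even integer `a ≥ 2` and every complex number `c`, the
polynomials `p₁(a,c)` and `p₂(a,c)` (coefficients of `W(a+5,0)` in the decoupling relations
`C₁(a)`, `C₂(a)` for the orbifold `(V_c^{⊗2})^{S₂}`) do not vanish simultaneously. -/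
theorem decoupling_coefficients_not_both_zero_even
    (a : ℤ) (ha : 2 ≤ a) (hae : Even a) (c : ℂ) :
    ¬(((a : ℂ) ^ 5 * (7 * c - 16) + 5 * (a : ℂ) ^ 4 * (13 * c - 64)
        + 15 * (a : ℂ) ^ 3 * (9 * c - 88) + (a : ℂ) ^ 2 * (560 - 185 * c)
        - 106 * (a : ℂ) * (7 * c - 76) - 480 * c + 7440 = 0) ∧
      ((a : ℂ) ^ 5 * (13 * c - 40) + (a : ℂ) ^ 4 * (70 * c - 556)
        + 25 * (a : ℂ) ^ 3 * (5 * c - 68) + 40 * (a : ℂ) ^ 2 * (2 * c - 23)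
        + 12 * (a : ℂ) * (c + 70) - 144 = 0)) := by
  rintro ⟨h1, h2⟩
  have key : ((72 * a ^ 10 + 1212 * a ^ 9 + 11880 * a ^ 8 + 58200 * a ^ 7 + 104016 * a ^ 6
      - 54444 * a ^ 5 - 245760 * a ^ 4 + 257400 * a ^ 3 + 846912 * a ^ 2
      + 385632 * a - 69120 : ℤ) : ℂ)
      = (13 * (a : ℂ) ^ 5 + 70 * (a : ℂ) ^ 4 + 125 * (a : ℂ) ^ 3 + 80 * (a : ℂ) ^ 2
          + 12 * (a : ℂ)) *
        ((a : ℂ) ^ 5 * (7 * c - 16) + 5 * (a : ℂ) ^ 4 * (13 * c - 64)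
          + 15 * (a : ℂ) ^ 3 * (9 * c - 88) + (a : ℂ) ^ 2 * (560 - 185 * c)
          - 106 * (a : ℂ) * (7 * c - 76) - 480 * c + 7440)
      - (7 * (a : ℂ) ^ 5 + 65 * (a : ℂ) ^ 4 + 135 * (a : ℂ) ^ 3 - 185 * (a : ℂ) ^ 2
          - 742 * (a : ℂ) - 480) *
        ((a : ℂ) ^ 5 * (13 * c - 40) + (a : ℂ) ^ 4 * (70 * c - 556)
          + 25 * (a : ℂ) ^ 3 * (5 * c - 68) + 40 * (a : ℂ) ^ 2 * (2 * c - 23)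
          + 12 * (a : ℂ) * (c + 70) - 144) := by
    push_cast
    ring
  rw [h1, h2, mul_zero, mul_zero, sub_zero] at key
  have hz : (72 * a ^ 10 + 1212 * a ^ 9 + 11880 * a ^ 8 + 58200 * a ^ 7 + 104016 * a ^ 6
      - 54444 * a ^ 5 - 245760 * a ^ 4 + 257400 * a ^ 3 + 846912 * a ^ 2
      + 385632 * a - 69120 : ℤ) = 0 := by exact_mod_cast key
  have hb : 0 ≤ a - 2 := by omega
  nlinarith [pow_nonneg hb 10, pow_nonneg hb 9, pow_nonneg hb 8, pow_nonneg hb 7,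
    pow_nonneg hb 6, pow_nonneg hb 5, pow_nonneg hb 4, pow_nonneg hb 3,
    pow_nonneg hb 2, hb]
end

section
/- For every odd integer a ≥ 3 and every complex number c, the two complex numbers q₁(a,c) = a²(7c−16) + 6a(9c−32) + 80(c−7) and q₂(a,c) = a³(13c−40) + 12a²(5c−32) + 68a(c−10) + 336 are not both zero. -/
/-- For every odd integer `a ≥ 3` and every complex number `c`, the
polynomials `q₁(a,c)` and `q₂(a,c)` (coefficients of `W(a+5,0)` in the decoupling relations
`C₁(a)`, `C₂(a)` for the orbifold `(V_c^{⊗2})^{S₂}`, odd case) do not vanish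
simultaneously. -/
theorem decoupling_coefficients_not_both_zero_odd
    (a : ℤ) (ha : 3 ≤ a) (hao : Odd a) (c : ℂ) :
    ¬(((a : ℂ) ^ 2 * (7 * c - 16) + 6 * (a : ℂ) * (9 * c - 32) + 80 * (c - 7) = 0) ∧
      ((a : ℂ) ^ 3 * (13 * c - 40) + 12 * (a : ℂ) ^ 2 * (5 * c - 32)
        + 68 * (a : ℂ) * (c - 10) + 336 = 0)) := by
  rintro ⟨h1, h2⟩
  have hz : 72 * (a : ℂ) ^ 5 + 1392 * (a : ℂ) ^ 4 + 8808 * (a : ℂ) ^ 3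
      + 18432 * (a : ℂ) ^ 2 - 1824 * (a : ℂ) - 26880 = 0 := by
    linear_combination (13 * (a : ℂ) ^ 3 + 60 * (a : ℂ) ^ 2 + 68 * (a : ℂ)) * h1
      - (7 * (a : ℂ) ^ 2 + 54 * (a : ℂ) + 80) * h2
  have hzz : ((72 * a ^ 5 + 1392 * a ^ 4 + 8808 * a ^ 3
      + 18432 * a ^ 2 - 1824 * a - 26880 : ℤ) : ℂ) = 0 := by
    push_cast
    linear_combination hz
  have hint : (72 * a ^ 5 + 1392 * a ^ 4 + 8808 * a ^ 3
      + 18432 * a ^ 2 - 1824 * a - 26880 : ℤ) = 0 := by exact_mod_cast hzz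
  nlinarith [sq_nonneg a, sq_nonneg (a - 3), pow_pos (by linarith : (0:ℤ) < a) 3,
    pow_pos (by linarith : (0:ℤ) < a) 5, mul_pos (mul_pos (by linarith : (0:ℤ) < a)
      (by linarith : (0:ℤ) < a)) (by linarith : (0:ℤ) < a)]
end

section
/- Define rational functions λ(c) = −(5c² + 33c − 44)/(7(5c+11)(2c−1)(c+20)) and μ(c) = −16/(7(2c−1)(c+20)). Then for every complex number c not in {1/2, −20, −11/5, −12, 1/4} the following three identities hold: (i) 32·λ(c) = (2(5c² + 33c − 44)/(5c+11))·μ(c); (ii) −128·(49·λ(c)²·(2c−1)(2c−25) − 1)/(63(2c−1)(2c+24)(4c−1)) = 21c(5c+22)·μ(c)²/(5c+11)²; (iii) −32·(2c−4)·(49·λ(c)²·(2c−1)(2c−25) − 1)/(441(2c−1)(2c+24)(4c−1)) = 3c(c−2)(5c+22)·μ(c)²/(2(5c+11)²). -/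
/-- The truncation-curve parameter `λ(c)` realizing `(V_c^{⊗2})^{S₂}` as a quotient of the
universal two-parameter even spin vertex algebra `W^{ev}(2c, λ)`. -/
noncomputable def lambdaTrunc (c : ℂ) : ℂ :=
  -(5 * c ^ 2 + 33 * c - 44) / (7 * (5 * c + 11) * (2 * c - 1) * (c + 20))

/-- The normalization constant `μ(c)` of the weight-4 primary field. -/
noncomputable def muNorm (c : ℂ) : ℂ := -16 / (7 * (2 * c - 1) * (c + 20))

/-- For every complex `c ∉ {1/2, -20, -11/5, -12, 1/4}`, the three
identities matching the fourth-product OPE coefficients of the normalized weight-4 primary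
of `(V_c^{⊗2})^{S₂}` with those of the universal even spin algebra `W^{ev}(2c, λ(c))` hold. -/
theorem truncation_curve_identities (c : ℂ) (h1 : c ≠ 1 / 2) (h2 : c ≠ -20)
    (h3 : c ≠ -11 / 5) (h4 : c ≠ -12) (h5 : c ≠ 1 / 4) :
    (32 * lambdaTrunc c = 2 * (5 * c ^ 2 + 33 * c - 44) / (5 * c + 11) * muNorm c) ∧
    (-(128 * (49 * lambdaTrunc c ^ 2 * (2 * c - 1) * (2 * c - 25) - 1)) /
        (63 * (2 * c - 1) * (2 * c + 24) * (4 * c - 1)) =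
      21 * c * (5 * c + 22) * muNorm c ^ 2 / (5 * c + 11) ^ 2) ∧
    (-(32 * (2 * c - 4) * (49 * lambdaTrunc c ^ 2 * (2 * c - 1) * (2 * c - 25) - 1)) /
        (441 * (2 * c - 1) * (2 * c + 24) * (4 * c - 1)) =
      3 * c * (c - 2) * (5 * c + 22) * muNorm c ^ 2 / (2 * (5 * c + 11) ^ 2)) := by

  have e1 : (2*c - 1) ≠ 0 := fun h => h1 (by linear_combination h / 2)
  have e2 : (c + 20) ≠ 0 := fun h => h2 (by linear_combination h)
  have e3 : (5*c + 11) ≠ 0 := fun h => h3 (by linear_combination h / 5)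
  have e4 : (2*c + 24) ≠ 0 := fun h => h4 (by linear_combination h / 2)
  have e5 : (4*c - 1) ≠ 0 := fun h => h5 (by linear_combination h / 4)
  have key : 49 * lambdaTrunc c ^ 2 * (2*c-1) * (2*c-25) - 1 =
      ((5*c^2+33*c-44)^2*(2*c-25) - (5*c+11)^2*(2*c-1)*(c+20)^2) /
        ((5*c+11)^2*(2*c-1)*(c+20)^2) := by
    simp only [lambdaTrunc]
    field_simp [e1, e2, e3, e4, e5, show c*2-1 ≠ 0 by rwa [mul_comm]]
    ring
  have hQ : ((5*c+11)^2*(2*c-1)*(c+20)^2 : ℂ) ≠ 0 :=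
    mul_ne_zero (mul_ne_zero (pow_ne_zero _ e3) e1) (pow_ne_zero _ e2)
  have hD1 : (63*(2*c-1)*(2*c+24)*(4*c-1) : ℂ) ≠ 0 :=
    mul_ne_zero (mul_ne_zero (mul_ne_zero (by norm_num) e1) e4) e5
  have hD2 : ((7*(2*c-1)*(c+20))^2 : ℂ) ≠ 0 :=
    pow_ne_zero _ (mul_ne_zero (mul_ne_zero (by norm_num) e1) e2)
  have hS : ((5*c+11)^2 : ℂ) ≠ 0 := pow_ne_zero _ e3
  have hS2 : (2*(5*c+11)^2 : ℂ) ≠ 0 := mul_ne_zero (by norm_num) hS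
  have h441 : (441*(2*c-1)*(2*c+24)*(4*c-1) : ℂ) ≠ 0 :=
    mul_ne_zero (mul_ne_zero (mul_ne_zero (by norm_num) e1) e4) e5
  refine ⟨?_, ?_, ?_⟩
  · simp only [lambdaTrunc, muNorm]
    field_simp [e1, e2, e3, e4, e5]
    ring
  · rw [key, muNorm, div_eq_div_iff hD1 hS, div_pow]
    field_simp [hQ, hD2]
    ring
  · rw [key, muNorm, div_eq_div_iff h441 hS2, div_pow]
    field_simp [hQ, hD2, show c*5+11 ≠ 0 by rwa [mul_comm]]
    ring
end
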